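/- Define x = w₀²/(4w₂²) and y = -2w₁⁴/(w₀w₂³) as rational functions of w₀,w₁,w₂, and dis₀(x,y) = (1-4x)⁴ - 256xy(1+4x+y). Then w₂⁸ · dis₀(x,y) = ((w₀+w₂)⁴ - (2w₁)⁴)·((w₀-w₂)⁴ + (2w₁)⁴) as an identity of rational functions (equivalently, of polynomials after clearing denominators, valid whenever w₀w₂ ≠ 0). -/

import Mathlib

/-- The principal discriminant `dis₀(x,y) = (1-4x)⁴ - 256xy(1+4x+y)`. -/
def dis₀ (x y : ℂ) : ℂ := (1 - 4 * x) ^ 4 - 256 * x * y * (1 + 4 * x + y)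

/-- With `x = w₀²/(4w₂²)` and `y = -2w₁⁴/(w₀w₂³)` (for `w₀w₂ ≠ 0`), one has
`w₂⁸ · dis₀(x,y) = ((w₀+w₂)⁴ - (2w₁)⁴)·((w₀-w₂)⁴ + (2w₁)⁴)`. -/
theorem dis0_in_w_coordinates (w₀ w₁ w₂ : ℂ) (hw₀ : w₀ ≠ 0) (hw₂ : w₂ ≠ 0) :
    w₂ ^ 8 * dis₀ (w₀ ^ 2 / (4 * w₂ ^ 2)) (-2 * w₁ ^ 4 / (w₀ * w₂ ^ 3)) =
      ((w₀ + w₂) ^ 4 - (2 * w₁) ^ 4) * ((w₀ - w₂) ^ 4 + (2 * w₁) ^ 4) := by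
  have h : w₀ ^ 2 * w₂ ^ 8 ≠ 0 := mul_ne_zero (pow_ne_zero _ hw₀) (pow_ne_zero _ hw₂)
  apply mul_left_cancel₀ h
  unfold dis₀
  field_simp
  ring_nf
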